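/- Let f : ℝⁿ → ℝ be three times continuously differentiable, μ-strongly convex (μ > 0) and M-self-concordant (M > 0). Let x_k ∈ ℝⁿ, g_k := ∇f(x_k), and let d_k ∈ ℝⁿ be a descent direction with g_kᵀd_k < 0. Set η_k := −g_kᵀd_k/‖d_k‖_{x_k}, t_k := η_k/((1 + Mη_k)‖d_k‖_{x_k}), and x_{k+1} := x_k + t_k d_k. Then: (i) f(x_{k+1}) ≤ f(x_k) − ω(Mη_k)/M²; (ii) f(x_{k+1}) − f(x_k) ≤ (1/2) t_k g_kᵀd_k; (iii) (2Mη_k/(1 + 2Mη_k)) g_kᵀd_k ≤ ∇f(x_{k+1})ᵀd_k ≤ 0. -/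

import Mathlib

noncomputable section

open scoped BigOperators Classical

/-- Vectors in `ℝⁿ` with the Euclidean norm. -/
abbrev V (n : ℕ) := EuclideanSpace ℝ (Fin n)

/-- The Euclidean dot product `uᵀv`. -/
def dot {n : ℕ} (u v : V n) : ℝ := ∑ i, u i * v i

/-- The Hessian quadratic form `dᵀ∇²f(x)d`. -/
def hessQ {n : ℕ} (f : V n → ℝ) (x d : V n) : ℝ := iteratedFDeriv ℝ 2 f x ![d, d]

/-- The weighted norm `‖d‖ₓ = (dᵀ∇²f(x)d)^{1/2}`. -/
def wnorm {n : ℕ} (f : V n → ℝ) (x d : V n) : ℝ := Real.sqrt (hessQ f x d)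

/-- `f` is `μ`-strongly convex. -/
def StrongConvex {n : ℕ} (μ : ℝ) (f : V n → ℝ) : Prop :=
  ∀ x y : V n, ∀ l : ℝ, 0 ≤ l → l ≤ 1 →
    f (l • x + (1 - l) • y) ≤ l * f x + (1 - l) * f y - l * (1 - l) * μ / 2 * ‖x - y‖ ^ 2

/-- `f` has `L`-Lipschitz continuous gradient. -/
def LipschitzGrad {n : ℕ} (L : ℝ) (f : V n → ℝ) : Prop :=
  ∀ x y : V n, ‖gradient f x - gradient f y‖ ≤ L * ‖x - y‖

/-- `f` is `M`-self-concordant: `|D³f(x)[d,d,d]| ≤ 2M (dᵀ∇²f(x)d)^{3/2}`. -/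
def SelfConcordant {n : ℕ} (M : ℝ) (f : V n → ℝ) : Prop :=
  ∀ x d : V n, |iteratedFDeriv ℝ 3 f x ![d, d, d]| ≤ 2 * M * hessQ f x d ^ ((3 : ℝ) / 2)

/-- `f` has `L₂`-Lipschitz continuous Hessian. -/
def LipschitzHessian {n : ℕ} (L₂ : ℝ) (f : V n → ℝ) : Prop :=
  ∀ x y : V n, ‖iteratedFDeriv ℝ 2 f x - iteratedFDeriv ℝ 2 f y‖ ≤ L₂ * ‖x - y‖

/-- `ω(z) = z - ln(1+z)`. -/
def omegaFn (z : ℝ) : ℝ := z - Real.log (1 + z)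

/-- `ω⋆(z) = -z - ln(1-z)`. -/
def omegaStar (z : ℝ) : ℝ := -z - Real.log (1 - z)

/-- Matrix–vector multiplication acting on Euclidean space. -/
def mulv {n : ℕ} (A : Matrix (Fin n) (Fin n) ℝ) (v : V n) : V n :=
  (EuclideanSpace.equiv (Fin n) ℝ).symm (A.mulVec (EuclideanSpace.equiv (Fin n) ℝ v))

/-- `g_k = ∇f(x_k)`. -/
def gvec {n : ℕ} (f : V n → ℝ) (x : ℕ → V n) (k : ℕ) : V n := gradient f (x k)

/-- `d_k = -B_k⁻¹ g_k`. -/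
def dvec {n : ℕ} (f : V n → ℝ) (x : ℕ → V n) (B : ℕ → Matrix (Fin n) (Fin n) ℝ) (k : ℕ) : V n :=
  -(mulv (B k)⁻¹ (gvec f x k))

/-- `η_k = -g_kᵀd_k / ‖d_k‖_{x_k}`. -/
def etaSeq {n : ℕ} (f : V n → ℝ) (x : ℕ → V n) (B : ℕ → Matrix (Fin n) (Fin n) ℝ) (k : ℕ) : ℝ :=
  -(dot (gvec f x k) (dvec f x B k)) / wnorm f (x k) (dvec f x B k)

/-- The adaptive step size `t_k = η_k / ((1 + M η_k) ‖d_k‖_{x_k})`. -/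
def tSeq {n : ℕ} (f : V n → ℝ) (M : ℝ) (x : ℕ → V n) (B : ℕ → Matrix (Fin n) (Fin n) ℝ)
    (k : ℕ) : ℝ :=
  etaSeq f x B k / ((1 + M * etaSeq f x B k) * wnorm f (x k) (dvec f x B k))

/-- `s_k = x_{k+1} - x_k`. -/
def svec {n : ℕ} (x : ℕ → V n) (k : ℕ) : V n := x (k + 1) - x k

/-- `y_k = g_{k+1} - g_k`. -/
def yvec {n : ℕ} (f : V n → ℝ) (x : ℕ → V n) (k : ℕ) : V n := gvec f x (k + 1) - gvec f x k

/-- The outer product `u vᵀ`. -/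
def outer {n : ℕ} (u v : V n) : Matrix (Fin n) (Fin n) ℝ := Matrix.of fun i j => u i * v j

/-- The adaptive BFGS method (Algorithm 1). -/
structure AdaptiveBFGS {n : ℕ} (f : V n → ℝ) (M : ℝ) (x : ℕ → V n)
    (B : ℕ → Matrix (Fin n) (Fin n) ℝ) : Prop where
  posdef : (B 0).PosDef
  step : ∀ k, x (k + 1) = x k + tSeq f M x B k • dvec f x B k
  update : ∀ k, B (k + 1) =
    B k - (dot (svec x k) (mulv (B k) (svec x k)))⁻¹ • (B k * outer (svec x k) (svec x k) * B k)
      + (dot (yvec f x k) (svec x k))⁻¹ • outer (yvec f x k) (yvec f x k)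

/-- `α_k = ‖d_k‖_{x_k} / (√L ‖d_k‖)`. -/
def alphaSeq {n : ℕ} (f : V n → ℝ) (L : ℝ) (x : ℕ → V n) (B : ℕ → Matrix (Fin n) (Fin n) ℝ)
    (k : ℕ) : ℝ :=
  wnorm f (x k) (dvec f x B k) / (Real.sqrt L * ‖dvec f x B k‖)

/-- The smoothness aided adaptive step size `t̃_k`. -/
def ttSeq {n : ℕ} (f : V n → ℝ) (M L : ℝ) (x : ℕ → V n) (B : ℕ → Matrix (Fin n) (Fin n) ℝ)
    (k : ℕ) : ℝ :=
  if (1 + M * etaSeq f x B k) * alphaSeq f L x B k ≤ 1 then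
    etaSeq f x B k / ((1 + M * etaSeq f x B k) * wnorm f (x k) (dvec f x B k))
  else
    (M * etaSeq f x B k * alphaSeq f L x B k ^ 2 + (1 - alphaSeq f L x B k) ^ 2)
      / (M * wnorm f (x k) (dvec f x B k))

/-- The smoothness aided adaptive BFGS method SA²-BFGS (Algorithm 3). -/
structure SA2BFGS {n : ℕ} (f : V n → ℝ) (M L : ℝ) (x : ℕ → V n)
    (B : ℕ → Matrix (Fin n) (Fin n) ℝ) : Prop where
  posdef : (B 0).PosDef
  step : ∀ k, x (k + 1) = x k + ttSeq f M L x B k • dvec f x B k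
  update : ∀ k, B (k + 1) =
    B k - (dot (svec x k) (mulv (B k) (svec x k)))⁻¹ • (B k * outer (svec x k) (svec x k) * B k)
      + (dot (yvec f x k) (svec x k))⁻¹ • outer (yvec f x k) (yvec f x k)

/-- The positive semidefinite square root of a positive semidefinite matrix
(the former `Matrix.PosSemidef.sqrt`, spelled out with its old definition). -/
def psdSqrt {n : ℕ} {P : Matrix (Fin n) (Fin n) ℝ} (hA : P.PosSemidef) : Matrix (Fin n) (Fin n) ℝ :=
  (hA.1.eigenvectorUnitary : Matrix (Fin n) (Fin n) ℝ) *
    Matrix.diagonal (Real.sqrt ∘ hA.1.eigenvalues) *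
    (star hA.1.eigenvectorUnitary : Matrix (Fin n) (Fin n) ℝ)

/-- `ĝ_k = P^{-1/2} g_k`. -/
def hatg {n : ℕ} (f : V n → ℝ) (x : ℕ → V n) (P : Matrix (Fin n) (Fin n) ℝ) (hP : P.PosDef)
    (k : ℕ) : V n :=
  mulv (psdSqrt hP.posSemidef)⁻¹ (gvec f x k)

/-- `ŝ_k = P^{1/2} s_k`. -/
def hats {n : ℕ} (x : ℕ → V n) (P : Matrix (Fin n) (Fin n) ℝ) (hP : P.PosDef) (k : ℕ) : V n :=
  mulv (psdSqrt hP.posSemidef) (svec x k)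

/-- `ŷ_k = P^{-1/2} y_k`. -/
def haty {n : ℕ} (f : V n → ℝ) (x : ℕ → V n) (P : Matrix (Fin n) (Fin n) ℝ) (hP : P.PosDef)
    (k : ℕ) : V n :=
  mulv (psdSqrt hP.posSemidef)⁻¹ (yvec f x k)

/-- `cos θ̂_k = -ĝ_kᵀŝ_k / (‖ĝ_k‖ ‖ŝ_k‖)`. -/
def cosθ {n : ℕ} (f : V n → ℝ) (x : ℕ → V n) (P : Matrix (Fin n) (Fin n) ℝ) (hP : P.PosDef)
    (k : ℕ) : ℝ :=
  -(dot (hatg f x P hP k) (hats x P hP k)) / (‖hatg f x P hP k‖ * ‖hats x P hP k‖)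

/-- `m̂_k = ŷ_kᵀŝ_k / ‖ŝ_k‖²`. -/
def mhat {n : ℕ} (f : V n → ℝ) (x : ℕ → V n) (P : Matrix (Fin n) (Fin n) ℝ) (hP : P.PosDef)
    (k : ℕ) : ℝ :=
  dot (haty f x P hP k) (hats x P hP k) / ‖hats x P hP k‖ ^ 2

/-- `q̂_k = ‖ĝ_k‖² / (f(x_k) - f(x*))`. -/
def qhat {n : ℕ} (f : V n → ℝ) (x : ℕ → V n) (xstar : V n) (P : Matrix (Fin n) (Fin n) ℝ)
    (hP : P.PosDef) (k : ℕ) : ℝ :=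
  ‖hatg f x P hP k‖ ^ 2 / (f (x k) - f xstar)

/-- The potential function `Ψ(A) = tr(A) - ln det(A) - n`. -/
def Psi {n : ℕ} (A : Matrix (Fin n) (Fin n) ℝ) : ℝ := A.trace - Real.log A.det - n

/-- The Hessian matrix `∇²f(x)` in the standard basis. -/
def hessMatrix {n : ℕ} (f : V n → ℝ) (x : V n) : Matrix (Fin n) (Fin n) ℝ :=
  Matrix.of fun i j =>
    iteratedFDeriv ℝ 2 f x ![EuclideanSpace.single i (1 : ℝ), EuclideanSpace.single j (1 : ℝ)]

open Filter Set Topology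

lemma nonneg_of_monotone_hasDerivAt {g : ℝ → ℝ} {a s : ℝ} (hg : Monotone g)
    (h : HasDerivAt g a s) : 0 ≤ a := by
  have h2 : Tendsto (slope g s) (𝓝[>] s) (𝓝 a) :=
    (hasDerivAt_iff_tendsto_slope.1 h).mono_left
      (nhdsWithin_mono _ (fun y hy => ne_of_gt hy))
  refine ge_of_tendsto h2 ?_
  filter_upwards [self_mem_nhdsWithin] with y hy
  rw [slope_def_field]
  exact div_nonneg (sub_nonneg.2 (hg (le_of_lt hy))) (sub_nonneg.2 hy.le)

lemma log_le_aux {z : ℝ} (hz : 0 ≤ z) : Real.log (1 + z) ≤ (2*z + z^2) / (2*(1+z)) := by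
  set G : ℝ → ℝ := fun y => (2*y + y^2) / (2*(1+y)) - Real.log (1+y) with hG
  have key : ∀ y : ℝ, 0 ≤ y → HasDerivAt G (y^2 / (2*(1+y)^2)) y := by
    intro y hy
    have h1y : (0:ℝ) < 1 + y := by linarith
    have hnum : HasDerivAt (fun y : ℝ => 2*y + y^2) (2 + 2*y) y := by
      simpa using ((hasDerivAt_id y).const_mul 2).fun_add ((hasDerivAt_pow 2 y))
    have hden : HasDerivAt (fun y : ℝ => 2*(1+y)) 2 y := by
      simpa using ((hasDerivAt_id y).const_add 1).const_mul 2
    have hlog : HasDerivAt (fun y : ℝ => Real.log (1+y)) (1/(1+y)) y := by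
      have := (Real.hasDerivAt_log h1y.ne').comp y ((hasDerivAt_id y).const_add 1)
      simpa [one_div, Function.comp_def] using this
    have := (hnum.div hden (by positivity)).sub hlog
    refine HasDerivAt.congr_deriv this ?_
    field_simp
    ring
  have hmono : MonotoneOn G (Ici (0:ℝ)) := by
    apply monotoneOn_of_deriv_nonneg (convex_Ici 0)
    · intro y hy; exact ((key y hy).continuousAt).continuousWithinAt
    · intro y hy; rw [interior_Ici] at hy
      exact ((key y hy.le).differentiableAt).differentiableWithinAt
    · intro y hy; rw [interior_Ici] at hy
      rw [(key y hy.le).deriv]; positivity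
  have h0 : G 0 = 0 := by simp [hG]
  have := hmono (self_mem_Ici) hz hz
  rw [h0, hG] at this
  simp only [sub_nonneg] at this
  linarith [this]

set_option maxHeartbeats 1000000 in
theorem key1d {φ φ1 φ2 φ3 : ℝ → ℝ} {M c : ℝ} (hM : 0 < M) (hc : 0 < c)
    (h1 : ∀ s, HasDerivAt φ (φ1 s) s)
    (h2 : ∀ s, HasDerivAt φ1 (φ2 s) s)
    (h3 : ∀ s, HasDerivAt φ2 (φ3 s) s)
    (hlow : ∀ s, c ≤ φ2 s)
    (hself : ∀ s, |φ3 s| ≤ 2 * M * Real.sqrt (φ2 s) ^ 3)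
    {r η t : ℝ} (hr : r = Real.sqrt (φ2 0)) (hη : η = -(φ1 0) / r) (hηpos : 0 < η)
    (ht : t = η / ((1 + M * η) * r)) :
    φ t ≤ φ 0 - (M*η - Real.log (1 + M*η)) / M^2 ∧
    φ t - φ 0 ≤ (1/2) * t * φ1 0 ∧
    (2*M*η / (1 + 2*M*η)) * φ1 0 ≤ φ1 t ∧ φ1 t ≤ 0 := by
  have hφ2pos : ∀ s, 0 < φ2 s := fun s => lt_of_lt_of_le hc (hlow s)
  have hrpos : 0 < r := by rw [hr]; exact Real.sqrt_pos.2 (hφ2pos 0)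
  have hr2 : r^2 = φ2 0 := by rw [hr]; exact Real.sq_sqrt (hφ2pos 0).le
  have hφ10 : φ1 0 = -(η * r) := by
    field_simp at hη; linarith [hη]
  set z := M * η with hz
  have hzpos : 0 < z := mul_pos hM hηpos
  have h1z : (0:ℝ) < 1 + z := by linarith
  have h2z : (0:ℝ) < 1 + 2*z := by linarith
  have htpos : 0 < t := by rw [ht]; positivity
  have hatr : M * r * t = z / (1 + z) := by
    rw [ht]; field_simp; ring
  have hone : ∀ s ∈ Icc 0 t, 1 / (1+z) ≤ 1 - M * r * s := by
    intro s hs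
    have h1 : M * r * s ≤ M * r * t :=
      mul_le_mul_of_nonneg_left hs.2 (by positivity)
    rw [hatr] at h1
    have he : 1 - z/(1+z) = 1/(1+z) := by field_simp; ring
    linarith
  have honepos : ∀ s ∈ Icc 0 t, 0 < 1 - M * r * s := by
    intro s hs
    have h0 : (0:ℝ) < 1/(1+z) := by positivity
    linarith [hone s hs]
  -- ψ and its derivative
  set ψ : ℝ → ℝ := fun s => (Real.sqrt (φ2 s))⁻¹ with hψ
  have hsq : ∀ s, 0 < Real.sqrt (φ2 s) := fun s => Real.sqrt_pos.2 (hφ2pos s)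
  have hψd : ∀ s, HasDerivAt ψ (-(1 / (2 * Real.sqrt (φ2 s)) * φ3 s) / (Real.sqrt (φ2 s))^2) s := by
    intro s
    have hsqrt : HasDerivAt (fun y => Real.sqrt (φ2 y)) (1 / (2 * Real.sqrt (φ2 s)) * φ3 s) s :=
      (Real.hasDerivAt_sqrt (hφ2pos s).ne').comp s (h3 s)
    exact hsqrt.inv (hsq s).ne'
  have hψbound : ∀ s, |(-(1 / (2 * Real.sqrt (φ2 s)) * φ3 s) / (Real.sqrt (φ2 s))^2)| ≤ M := by
    intro s
    have h := hself s
    have hs0 := hsq s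
    rw [abs_div, abs_neg, abs_mul,
      abs_of_pos (by positivity : (0:ℝ) < 1 / (2 * Real.sqrt (φ2 s))),
      abs_of_pos (by positivity : (0:ℝ) < (Real.sqrt (φ2 s))^2)]
    rw [div_le_iff₀ (by positivity)]
    calc 1 / (2 * Real.sqrt (φ2 s)) * |φ3 s|
        ≤ 1 / (2 * Real.sqrt (φ2 s)) * (2 * M * Real.sqrt (φ2 s) ^ 3) :=
          mul_le_mul_of_nonneg_left h (by positivity)
      _ = M * Real.sqrt (φ2 s) ^ 2 := by
          field_simp
  have hψlip : ∀ s ∈ Icc 0 t, |ψ s - ψ 0| ≤ M * s := by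
    intro s hs
    have := Convex.norm_image_sub_le_of_norm_hasDerivWithin_le
      (f := ψ) (f' := fun s => (-(1 / (2 * Real.sqrt (φ2 s)) * φ3 s) / (Real.sqrt (φ2 s))^2))
      (fun x _ => (hψd x).hasDerivWithinAt) (fun x _ => by
        rw [Real.norm_eq_abs]; exact hψbound x) convex_univ (mem_univ 0) (mem_univ s)
    simpa [Real.norm_eq_abs, abs_of_nonneg hs.1] using this
  have hψ0 : ψ 0 = 1 / r := by rw [hψ, hr]; simp [one_div]
  have hψpos : ∀ s, 0 < ψ s := fun s => by rw [hψ]; have := hsq s; positivity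
  -- two-sided bound on φ2 over Icc 0 t
  have hup : ∀ s ∈ Icc 0 t, φ2 s ≤ (r / (1 - M*r*s))^2 := by
    intro s hs
    have h1p := honepos s hs
    have hlb : (1 - M*r*s)/r ≤ ψ s := by
      have h := (abs_sub_le_iff.1 (hψlip s hs)).2
      rw [hψ0] at h
      have : 1/r - M*s ≤ ψ s := by linarith
      have he : (1 - M*r*s)/r = 1/r - M*s := by field_simp
      linarith
    have hinv := inv_anti₀ (by positivity : (0:ℝ) < (1 - M*r*s)/r) hlb
    rw [hψ] at hinv
    simp only [inv_inv, inv_div] at hinv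
    calc φ2 s = Real.sqrt (φ2 s) ^ 2 := (Real.sq_sqrt (hφ2pos s).le).symm
      _ ≤ (r / (1 - M*r*s))^2 := by
          apply pow_le_pow_left₀ (Real.sqrt_nonneg _) hinv
  have hlo : ∀ s ∈ Icc 0 t, (r / (1 + M*r*s))^2 ≤ φ2 s := by
    intro s hs
    have h1p : (0:ℝ) < 1 + M*r*s := by
      have : 0 ≤ M*r*s := mul_nonneg (by positivity) hs.1
      linarith
    have hub : ψ s ≤ (1 + M*r*s)/r := by
      have h := (abs_sub_le_iff.1 (hψlip s hs)).1
      rw [hψ0] at h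
      have : ψ s ≤ 1/r + M*s := by linarith
      have he : (1 + M*r*s)/r = 1/r + M*s := by field_simp
      linarith
    have hinv := inv_anti₀ (hψpos s) hub
    rw [hψ] at hinv
    simp only [inv_inv, inv_div] at hinv
    calc (r / (1 + M*r*s))^2 ≤ Real.sqrt (φ2 s) ^ 2 := by
          apply pow_le_pow_left₀ (by positivity) hinv
      _ = φ2 s := Real.sq_sqrt (hφ2pos s).le
  -- comparison functions
  set U : ℝ → ℝ := fun s => φ1 0 + (r/M) * ((1 - M*r*s)⁻¹ - 1) with hUdef
  set Lw : ℝ → ℝ := fun s => φ1 0 + (r/M) * (1 - (1 + M*r*s)⁻¹) with hLdef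
  set W : ℝ → ℝ := fun s => φ 0 + s * φ1 0 + (1/M^2) * (-(M*r*s) - Real.log (1 - M*r*s)) with hWdef
  have hlin : ∀ s : ℝ, HasDerivAt (fun s => 1 - M*r*s) (-(M*r)) s := by
    intro s
    simpa using ((hasDerivAt_id s).const_mul (M*r)).const_sub 1
  have hlin2 : ∀ s : ℝ, HasDerivAt (fun s => 1 + M*r*s) (M*r) s := by
    intro s
    simpa using ((hasDerivAt_id s).const_mul (M*r)).const_add 1
  have hU : ∀ s ∈ Icc 0 t, HasDerivAt U ((r / (1 - M*r*s))^2) s := by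
    intro s hs
    have hinv : HasDerivAt (fun s => (1 - M*r*s)⁻¹) (M*r / (1 - M*r*s)^2) s := by
      have := (hlin s).fun_inv (honepos s hs).ne'
      simpa using this
    have := ((hinv.sub_const 1).const_mul (r/M)).const_add (φ1 0)
    refine HasDerivAt.congr_deriv this ?_
    have := (honepos s hs).ne'
    field_simp
  have h1pos' : ∀ s ∈ Icc 0 t, (0:ℝ) < 1 + M*r*s := by
    intro s hs
    have : 0 ≤ M*r*s := mul_nonneg (by positivity) hs.1
    linarith
  have hL : ∀ s ∈ Icc 0 t, HasDerivAt Lw ((r / (1 + M*r*s))^2) s := by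
    intro s hs
    have hinv : HasDerivAt (fun s => (1 + M*r*s)⁻¹) (-(M*r) / (1 + M*r*s)^2) s := by
      have := (hlin2 s).fun_inv (h1pos' s hs).ne'
      simpa using this
    have := ((hinv.const_sub 1).const_mul (r/M)).const_add (φ1 0)
    refine HasDerivAt.congr_deriv this ?_
    have := (h1pos' s hs).ne'
    field_simp
  have hW : ∀ s ∈ Icc 0 t, HasDerivAt W (U s) s := by
    intro s hs
    have hlog : HasDerivAt (fun s => Real.log (1 - M*r*s)) ((1 - M*r*s)⁻¹ * (-(M*r))) s := by
      have := (Real.hasDerivAt_log (honepos s hs).ne').comp s (hlin s)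
      simpa [one_div, Function.comp_def] using this
    have hnegl : HasDerivAt (fun s : ℝ => -(M*r*s)) (-(M*r)) s := by
      simpa using ((hasDerivAt_id s).const_mul (M*r)).fun_neg
    have := (((hasDerivAt_id s).mul_const (φ1 0)).const_add (φ 0)).add
      (((hnegl.sub hlog).const_mul (1/M^2)))
    refine HasDerivAt.congr_deriv this ?_
    have := (honepos s hs).ne'
    simp only [hUdef]
    field_simp
    ring
  -- φ1 ≤ U on Icc 0 t
  have hIcc : (0:ℝ) ∈ Icc 0 t := left_mem_Icc.2 htpos.le
  have htmem : t ∈ Icc 0 t := right_mem_Icc.2 htpos.le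
  have hAanti : AntitoneOn (fun s => φ1 s - U s) (Icc 0 t) := by
    apply antitoneOn_of_deriv_nonpos (convex_Icc 0 t)
    · intro s hs
      exact (((h2 s).sub (hU s hs)).continuousAt).continuousWithinAt
    · intro s hs
      rw [interior_Icc] at hs
      exact (((h2 s).sub (hU s (Ioo_subset_Icc_self hs))).differentiableAt).differentiableWithinAt
    · intro s hs
      rw [interior_Icc] at hs
      rw [((h2 s).fun_sub (hU s (Ioo_subset_Icc_self hs))).deriv]
      have := hup s (Ioo_subset_Icc_self hs)
      linarith
  have hU0 : U 0 = φ1 0 := by simp only [hUdef]; simp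
  have hφ1le : ∀ s ∈ Icc 0 t, φ1 s ≤ U s := by
    intro s hs
    have := hAanti hIcc hs hs.1
    simp only [hU0] at this
    linarith
  -- Lw ≤ φ1 on Icc 0 t
  have hBmono : MonotoneOn (fun s => φ1 s - Lw s) (Icc 0 t) := by
    apply monotoneOn_of_deriv_nonneg (convex_Icc 0 t)
    · intro s hs
      exact (((h2 s).sub (hL s hs)).continuousAt).continuousWithinAt
    · intro s hs
      rw [interior_Icc] at hs
      exact (((h2 s).sub (hL s (Ioo_subset_Icc_self hs))).differentiableAt).differentiableWithinAt
    · intro s hs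
      rw [interior_Icc] at hs
      rw [((h2 s).fun_sub (hL s (Ioo_subset_Icc_self hs))).deriv]
      have := hlo s (Ioo_subset_Icc_self hs)
      linarith
  have hL0 : Lw 0 = φ1 0 := by simp only [hLdef]; simp
  have hLle : Lw t ≤ φ1 t := by
    have := hBmono hIcc htmem htpos.le
    simp only [hL0] at this
    linarith
  -- φ ≤ W on Icc 0 t
  have hCanti : AntitoneOn (fun s => φ s - W s) (Icc 0 t) := by
    apply antitoneOn_of_deriv_nonpos (convex_Icc 0 t)
    · intro s hs
      exact (((h1 s).sub (hW s hs)).continuousAt).continuousWithinAt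
    · intro s hs
      rw [interior_Icc] at hs
      exact (((h1 s).sub (hW s (Ioo_subset_Icc_self hs))).differentiableAt).differentiableWithinAt
    · intro s hs
      rw [interior_Icc] at hs
      rw [((h1 s).fun_sub (hW s (Ioo_subset_Icc_self hs))).deriv]
      have := hφ1le s (Ioo_subset_Icc_self hs)
      linarith
  have hW0 : W 0 = φ 0 := by simp only [hWdef]; simp
  have hφW : φ t ≤ W t := by
    have := hCanti hIcc htmem htpos.le
    simp only [hW0] at this
    linarith
  -- final arithmetic
  have hrt : 1 - M*r*t = 1/(1+z) := by
    rw [hatr]; field_simp; ring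
  have hrt2 : 1 + M*r*t = (1+2*z)/(1+z) := by
    rw [hatr]; field_simp; ring
  have hrη : (r/M) * z = η * r := by
    rw [hz]; field_simp
  have hUt : U t = 0 := by
    simp only [hUdef]
    simp only [hrt]
    rw [hφ10]
    have : ((1:ℝ)/(1+z))⁻¹ = 1+z := by
      rw [one_div, inv_inv]
    rw [this]
    have : (1 + z - 1 : ℝ) = z := by ring
    linarith [hrη]
  have hφ1t_le : φ1 t ≤ 0 := by
    have := hφ1le t htmem
    rw [hUt] at this
    exact this
  have hLt : Lw t = (2*M*η / (1 + 2*M*η)) * φ1 0 := by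
    simp only [hLdef, hrt2, hφ10]
    simp only [hz]
    have hMne : M ≠ 0 := hM.ne'
    have ha : (1+M*η) ≠ 0 := by nlinarith
    have hb : (1+2*(M*η)) ≠ 0 := by nlinarith
    field_simp
    ring
  have hφ1t_ge : (2*M*η / (1 + 2*M*η)) * φ1 0 ≤ φ1 t := by
    rw [← hLt]; exact hLle
  -- t * φ1 0 value
  have htφ : t * φ1 0 = -(z^2/(M^2*(1+z))) := by
    rw [ht, hφ10, hz]
    field_simp
  have hlogz : Real.log (1 - M*r*t) = -Real.log (1+z) := by
    rw [hrt, one_div, Real.log_inv]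
  have hWt : W t = φ 0 - (z - Real.log (1+z))/M^2 := by
    simp only [hWdef]
    rw [hlogz, hatr, htφ]
    field_simp
    ring
  have goal1 : φ t ≤ φ 0 - (z - Real.log (1+z))/M^2 := by
    rw [← hWt]; exact hφW
  refine ⟨by rw [hz] at goal1 ⊢; exact goal1, ?_, hφ1t_ge, hφ1t_le⟩
  -- part (ii)
  have hlog := log_le_aux hzpos.le
  have hM2 : (0:ℝ) < M^2 := by positivity
  have key2 : Real.log (1+z) - z/(1+z) ≤ z^2/(2*(1+z)) := by
    have : (2*z + z^2)/(2*(1+z)) = z/(1+z) + z^2/(2*(1+z)) := by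
      field_simp
    linarith [hlog, this.le]
  have hWt2 : W t - φ 0 = t * φ1 0 + (1/M^2) * (Real.log (1+z) - z/(1+z)) := by
    simp only [hWdef]
    rw [hlogz, hatr]
    ring
  have : W t - φ 0 ≤ (1/2) * t * φ1 0 := by
    rw [hWt2]
    have hb : (1/M^2) * (Real.log (1+z) - z/(1+z)) ≤ (1/M^2) * (z^2/(2*(1+z))) :=
      mul_le_mul_of_nonneg_left key2 (by positivity)
    have he : (1/M^2) * (z^2/(2*(1+z))) = -(1/2) * (t * φ1 0) := by
      rw [htφ]; field_simp
    nlinarith [hb, he]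
  linarith [hφW, this]


section line
variable {n : ℕ} {f : V n → ℝ}

lemma hasDerivAt_line (xk d : V n) (s : ℝ) :
    HasDerivAt (fun s : ℝ => xk + s • d) d s := by
  simpa using ((hasDerivAt_id s).smul_const d).const_add xk

lemma lineD1 (hf : ContDiff ℝ 3 f) (xk d : V n) (s : ℝ) :
    HasDerivAt (fun s : ℝ => f (xk + s • d)) (fderiv ℝ f (xk + s • d) d) s := by
  exact ((hf.differentiable (by norm_num)).differentiableAt.hasFDerivAt).comp_hasDerivAt s
    (hasDerivAt_line xk d s)

lemma lineD2 (hf : ContDiff ℝ 3 f) (xk d : V n) (s : ℝ) :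
    HasDerivAt (fun s : ℝ => fderiv ℝ f (xk + s • d) d) (hessQ f (xk + s • d) d) s := by
  have hF1 : ContDiff ℝ 2 (fderiv ℝ f) := hf.fderiv_right (by norm_num)
  have hd : HasDerivAt (fun s : ℝ => fderiv ℝ f (xk + s • d))
      (fderiv ℝ (fderiv ℝ f) (xk + s • d) d) s :=
    ((hF1.differentiable (by norm_num)).differentiableAt.hasFDerivAt).comp_hasDerivAt s
      (hasDerivAt_line xk d s)
  have := ((ContinuousLinearMap.apply ℝ ℝ d).hasFDerivAt).comp_hasDerivAt s hd
  have hval : hessQ f (xk + s • d) d = fderiv ℝ (fderiv ℝ f) (xk + s • d) d d := by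
    rw [hessQ, iteratedFDeriv_two_apply]
    simp
  rw [hval]
  exact this

lemma lineD3 (hf : ContDiff ℝ 3 f) (xk d : V n) (s : ℝ) :
    HasDerivAt (fun s : ℝ => hessQ f (xk + s • d) d)
      (iteratedFDeriv ℝ 3 f (xk + s • d) ![d, d, d]) s := by
  have hdiff : Differentiable ℝ (iteratedFDeriv ℝ 2 f) :=
    hf.differentiable_iteratedFDeriv (by norm_num)
  have hd : HasDerivAt (fun s : ℝ => iteratedFDeriv ℝ 2 f (xk + s • d))
      (fderiv ℝ (iteratedFDeriv ℝ 2 f) (xk + s • d) d) s :=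
    (hdiff.differentiableAt.hasFDerivAt).comp_hasDerivAt s (hasDerivAt_line xk d s)
  have := ((ContinuousMultilinearMap.apply ℝ (fun _ : Fin 2 => V n) ℝ ![d, d]).hasFDerivAt).comp_hasDerivAt s hd
  have hval : iteratedFDeriv ℝ 3 f (xk + s • d) ![d, d, d]
      = fderiv ℝ (iteratedFDeriv ℝ 2 f) (xk + s • d) d ![d, d] := by
    have h0 : iteratedFDeriv ℝ 3 f (xk + s • d) ![d, d, d]
        = fderiv ℝ (iteratedFDeriv ℝ 2 f) (xk + s • d) (![d,d,d] 0) (Fin.tail ![d,d,d]) := rfl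
    have h1 : Fin.tail (![d, d, d] : Fin 3 → V n) = ![d, d] := by
      funext i; fin_cases i <;> rfl
    rw [h0, h1]
    simp
  rw [hval]
  exact this

end line

lemma dot_gradient_eq {n : ℕ} {f : V n → ℝ} (hf : ContDiff ℝ 3 f) (x v : V n) :
    dot (gradient f x) v = fderiv ℝ f x v := by
  have hdiff : DifferentiableAt ℝ f x := (hf.differentiable (by norm_num)).differentiableAt
  have h1 : HasFDerivAt f (InnerProductSpace.toDual ℝ (V n) (gradient f x)) x :=
    hasGradientAt_iff_hasFDerivAt.1 hdiff.hasGradientAt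
  have h2 : fderiv ℝ f x = InnerProductSpace.toDual ℝ (V n) (gradient f x) := h1.fderiv
  rw [h2]
  rw [InnerProductSpace.toDual_apply_apply]
  rw [dot]
  simp only [PiLp.inner_apply, RCLike.inner_apply, conj_trivial]
  simp [mul_comm]

lemma hess_lower {n : ℕ} {f : V n → ℝ} (hf : ContDiff ℝ 3 f) {μ : ℝ}
    (hsc : StrongConvex μ f) (xk d : V n) (s : ℝ) :
    μ * ‖d‖ ^ 2 ≤ hessQ f (xk + s • d) d := by
  set g : ℝ → ℝ := fun s => f (xk + s • d) - (μ * ‖d‖ ^ 2) * s ^ 2 / 2 with hg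
  have hgconv : ConvexOn ℝ univ g := by
    constructor
    · exact convex_univ
    · intro x _ y _ a b ha hb hab
      have hb' : b = 1 - a := by linarith
      subst hb'
      have hpt : a • (xk + x • d) + (1 - a) • (xk + y • d) = xk + (a * x + (1 - a) * y) • d := by
        module
      have hnorm : ‖(xk + x • d) - (xk + y • d)‖ ^ 2 = (x - y) ^ 2 * ‖d‖ ^ 2 := by
        have : (xk + x • d) - (xk + y • d) = (x - y) • d := by module
        rw [this, norm_smul, Real.norm_eq_abs, mul_pow, sq_abs]
      have hineq := hsc (xk + x • d) (xk + y • d) a ha (by linarith)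
      rw [hpt, hnorm] at hineq
      simp only [hg, smul_eq_mul]
      nlinarith [hineq]
  have hmono : Monotone (fun s : ℝ => fderiv ℝ f (xk + s • d) d - (μ * ‖d‖ ^ 2) * s) := by
    have hgd : ∀ u : ℝ, HasDerivAt g (fderiv ℝ f (xk + u • d) d - (μ * ‖d‖ ^ 2) * u) u := by
      intro u
      have h2 : HasDerivAt (fun s : ℝ => (μ * ‖d‖ ^ 2) * s ^ 2 / 2) ((μ * ‖d‖ ^ 2) * u) u := by
        have := ((hasDerivAt_pow 2 u).const_mul (μ * ‖d‖ ^ 2)).div_const 2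
        refine HasDerivAt.congr_deriv this ?_
        ring
      exact (lineD1 hf xk d u).sub h2
    intro a b hab
    rcases eq_or_lt_of_le hab with rfl | hab'
    · exact le_refl _
    · exact le_trans
        (hgconv.le_slope_of_hasDerivAt (mem_univ a) (mem_univ b) hab' (hgd a))
        (hgconv.slope_le_of_hasDerivAt (mem_univ a) (mem_univ b) hab' (hgd b))
  have hD : HasDerivAt (fun s : ℝ => fderiv ℝ f (xk + s • d) d - (μ * ‖d‖ ^ 2) * s)
      (hessQ f (xk + s • d) d - (μ * ‖d‖ ^ 2)) s := by
    have h2 : HasDerivAt (fun s : ℝ => (μ * ‖d‖ ^ 2) * s) (μ * ‖d‖ ^ 2) s := by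
      simpa using (hasDerivAt_id s).const_mul (μ * ‖d‖ ^ 2)
    exact (lineD2 hf xk d s).sub h2
  have := nonneg_of_monotone_hasDerivAt hmono hD
  linarith

lemma selfconc_bound {n : ℕ} {f : V n → ℝ} {M : ℝ} (hself : SelfConcordant M f)
    (x d : V n) (hq : 0 ≤ hessQ f x d) :
    |iteratedFDeriv ℝ 3 f x ![d, d, d]| ≤ 2 * M * Real.sqrt (hessQ f x d) ^ 3 := by
  have h := hself x d
  have : hessQ f x d ^ ((3:ℝ)/2) = Real.sqrt (hessQ f x d) ^ 3 := by
    rw [Real.sqrt_eq_rpow, ← Real.rpow_natCast (hessQ f x d ^ ((1:ℝ)/2)) 3,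
      ← Real.rpow_mul hq]
    norm_num
  rw [this] at h
  exact h


theorem stmt1 {n : ℕ} (f : V n → ℝ) (μ M : ℝ) (hμ : 0 < μ) (hM : 0 < M)
    (hf : ContDiff ℝ 3 f) (hsc : StrongConvex μ f) (hself : SelfConcordant M f)
    (xk dk : V n) (hdesc : dot (gradient f xk) dk < 0)
    (η : ℝ) (hη : η = -(dot (gradient f xk) dk) / wnorm f xk dk)
    (t : ℝ) (ht : t = η / ((1 + M * η) * wnorm f xk dk))
    (x' : V n) (hx' : x' = xk + t • dk) :
    (f x' ≤ f xk - omegaFn (M * η) / M ^ 2) ∧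
    (f x' - f xk ≤ (1 / 2) * t * dot (gradient f xk) dk) ∧
    (2 * M * η / (1 + 2 * M * η) * dot (gradient f xk) dk ≤ dot (gradient f x') dk ∧
      dot (gradient f x') dk ≤ 0) := by
  have hd0 : dk ≠ 0 := by
    intro h
    rw [h] at hdesc
    simp [dot] at hdesc
  have hdn : 0 < ‖dk‖ := norm_pos_iff.2 hd0
  have hc : 0 < μ * ‖dk‖ ^ 2 := by positivity
  have hlow : ∀ s : ℝ, μ * ‖dk‖ ^ 2 ≤ hessQ f (xk + s • dk) dk :=
    fun s => hess_lower hf hsc xk dk s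
  have hx0 : xk + (0:ℝ) • dk = xk := by simp
  have hq0 : 0 < hessQ f xk dk := by
    have := hlow 0
    rw [hx0] at this
    linarith
  have hwpos : 0 < wnorm f xk dk := Real.sqrt_pos.2 hq0
  have hgd : dot (gradient f xk) dk = fderiv ℝ f (xk + (0:ℝ) • dk) dk := by
    rw [dot_gradient_eq hf, hx0]
  have hηpos : 0 < η := by
    rw [hη]
    apply div_pos (by linarith) hwpos
  have hr' : wnorm f xk dk = Real.sqrt (hessQ f (xk + (0:ℝ) • dk) dk) := by
    rw [wnorm, hx0]
  have hη' : η = -(fderiv ℝ f (xk + (0:ℝ) • dk) dk) / wnorm f xk dk := by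
    rw [hη, hgd]
  have key := key1d (φ := fun s : ℝ => f (xk + s • dk))
    (φ1 := fun s : ℝ => fderiv ℝ f (xk + s • dk) dk)
    (φ2 := fun s : ℝ => hessQ f (xk + s • dk) dk)
    (φ3 := fun s : ℝ => iteratedFDeriv ℝ 3 f (xk + s • dk) ![dk, dk, dk])
    hM hc (lineD1 hf xk dk) (lineD2 hf xk dk) (lineD3 hf xk dk) hlow
    (fun s => selfconc_bound hself (xk + s • dk) dk (le_of_lt (lt_of_lt_of_le hc (hlow s))))
    hr' hη' hηpos ht
  obtain ⟨k1, k2, k3, k4⟩ := key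
  have hx't : f x' = f (xk + t • dk) := by rw [hx']
  have hgd' : dot (gradient f x') dk = fderiv ℝ f (xk + t • dk) dk := by
    rw [dot_gradient_eq hf, hx']
  refine ⟨?_, ?_, ?_, ?_⟩
  · rw [hx't, omegaFn]
    simpa using k1
  · rw [hx't, hgd]
    simpa using k2
  · rw [hgd', hgd]
    simpa using k3
  · rw [hgd']
    exact k4
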